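/- With the setup below, there exists R₀ < ∞ depending only on d such that for all R ≥ max(R₀, 2·max_{3≤i≤d}|p_i|), all integers m, n ≥ 1 and all i, j ∈ {1, …, d−4} with (m, i) ≠ (n, j), the sets of lines ℒ_{B^i_{R^m}} ∩ ℒ_{B^{i+1}_{R^m}} and ℒ_{B^j_{R^n}} ∩ ℒ_{B^{j+1}_{R^n}} are disjoint; in particular no line of ℝ^d intersects all four boxes B^i_{R^m}, B^{i+1}_{R^m}, B^j_{R^n}, B^{j+1}_{R^n}. -/

import Mathlib

open MeasureTheory
open scoped ENNReal

noncomputable section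

/-- A line in `ℝ^d`: a set of the form `{a + t • v : t ∈ ℝ}` with `v ≠ 0`. -/
def IsLine {d : ℕ} (L : Set (EuclideanSpace ℝ (Fin d))) : Prop :=
  ∃ a v : EuclideanSpace ℝ (Fin d), v ≠ 0 ∧ L = {x | ∃ t : ℝ, x = a + t • v}

/-- The standard basis vector of `ℝ^d` with a `1` in (0-indexed) coordinate `i`
(junk value `0` if `i ≥ d`). -/
def stdv (d i : ℕ) : EuclideanSpace ℝ (Fin d) :=
  if h : i < d then EuclideanSpace.single (⟨i, h⟩ : Fin d) 1 else 0

/-- The (0-indexed) `i`-th coordinate of a vector (junk value `0` if `i ≥ d`). -/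
def coordNat {d : ℕ} (x : EuclideanSpace ℝ (Fin d)) (i : ℕ) : ℝ :=
  if h : i < d then x ⟨i, h⟩ else 0

/-- The cylinder of radius `r` around a set `L`. -/
def cylinder {d : ℕ} (L : Set (EuclideanSpace ℝ (Fin d))) (r : ℝ) :
    Set (EuclideanSpace ℝ (Fin d)) :=
  {x | Metric.infDist x L ≤ r}

/-- The line `L₁ = {t • e₁ : t ∈ ℝ}`. -/
def lineOne (d : ℕ) : Set (EuclideanSpace ℝ (Fin d)) := {x | ∃ t : ℝ, x = t • stdv d 0}

/-- The cylinder `𝔠₁` of radius `√d` around `L₁`. -/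
def cylOne (d : ℕ) : Set (EuclideanSpace ℝ (Fin d)) := cylinder (lineOne d) (Real.sqrt d)

/-- The piece `𝔠_{1,m} = {x ∈ 𝔠₁ : R^{m-1}/2 ≤ |x₁| < R^m/2 - 10√d}`. -/
def cylOnePiece (d : ℕ) (R : ℝ) (m : ℕ) : Set (EuclideanSpace ℝ (Fin d)) :=
  {x ∈ cylOne d | R ^ (m - 1) / 2 ≤ |coordNat x 0| ∧
    |coordNat x 0| < R ^ m / 2 - 10 * Real.sqrt d}

/-- The direction vector `(l₁, l₂, 0, …, 0)` of the line `L₂`. -/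
def dirTwo (d : ℕ) (l1 l2 : ℝ) : EuclideanSpace ℝ (Fin d) := l1 • stdv d 0 + l2 • stdv d 1

/-- The line `L₂ = {p + t • (l₁, l₂, 0, …, 0) : t ∈ ℝ}`. -/
def lineTwo (d : ℕ) (p : EuclideanSpace ℝ (Fin d)) (l1 l2 : ℝ) :
    Set (EuclideanSpace ℝ (Fin d)) :=
  {x | ∃ t : ℝ, x = p + t • dirTwo d l1 l2}

/-- The cylinder `𝔠₂` of radius `√d` around `L₂`. -/
def cylTwo (d : ℕ) (p : EuclideanSpace ℝ (Fin d)) (l1 l2 : ℝ) :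
    Set (EuclideanSpace ℝ (Fin d)) :=
  cylinder (lineTwo d p l1 l2) (Real.sqrt d)

/-- Orthogonal projection onto the affine line `L₂` (valid when `(l₁,l₂)` is a unit vector). -/
def projLineTwo (d : ℕ) (p : EuclideanSpace ℝ (Fin d)) (l1 l2 : ℝ)
    (x : EuclideanSpace ℝ (Fin d)) : EuclideanSpace ℝ (Fin d) :=
  p + (inner ℝ (x - p) (dirTwo d l1 l2) : ℝ) • dirTwo d l1 l2

/-- The piece `𝔠_{2,m} = {x ∈ 𝔠₂ : R^{m-1}/2 ≤ |Π_{L₂}(x) - p| < R^m/2 - 10√d}`. -/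
def cylTwoPiece (d : ℕ) (p : EuclideanSpace ℝ (Fin d)) (l1 l2 R : ℝ) (m : ℕ) :
    Set (EuclideanSpace ℝ (Fin d)) :=
  {x ∈ cylTwo d p l1 l2 | R ^ (m - 1) / 2 ≤ dist (projLineTwo d p l1 l2 x) p ∧
    dist (projLineTwo d p l1 l2 x) p < R ^ m / 2 - 10 * Real.sqrt d}

/-- The point `q_{i,m} = p + N·R^m·e_{i+3}` (`i` is 1-based), where `N = 10d + 1`. -/
def qpt (d : ℕ) (p : EuclideanSpace ℝ (Fin d)) (R : ℝ) (m i : ℕ) :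
    EuclideanSpace ℝ (Fin d) :=
  p + ((10 * d + 1 : ℝ) * R ^ m) • stdv d (i + 2)

/-- The box `B^i_{R^m} = q_{i,m} + [-R^m/2, R^m/2]^d` (`i` is 1-based). -/
def bigBox (d : ℕ) (p : EuclideanSpace ℝ (Fin d)) (R : ℝ) (m i : ℕ) :
    Set (EuclideanSpace ℝ (Fin d)) :=
  {x | ∀ j : Fin d, |x j - qpt d p R m i j| ≤ R ^ m / 2}

/-- A line `L` meets both sets `S` and `T`, i.e. `L ∈ ℒ_S ∩ ℒ_T`. -/
def meets {d : ℕ} (L S T : Set (EuclideanSpace ℝ (Fin d))) : Prop :=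
  (L ∩ S).Nonempty ∧ (L ∩ T).Nonempty

/-! ### Auxiliary lemmas for `stmt11` -/

private lemma qpt_apply' (d : ℕ) (p : EuclideanSpace ℝ (Fin d)) (R : ℝ) (m i : ℕ)
    (h : i + 2 < d) (k : Fin d) :
    qpt d p R m i k = p k + if k = ⟨i + 2, h⟩ then (10 * d + 1 : ℝ) * R ^ m else 0 := by
  simp [qpt, stdv, h, PiLp.add_apply, PiLp.smul_apply, EuclideanSpace.single_apply,
    smul_eq_mul]

private lemma box_small' {d : ℕ} {p : EuclideanSpace ℝ (Fin d)} {R : ℝ} {m i : ℕ}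
    (h : i + 2 < d) {x : EuclideanSpace ℝ (Fin d)} (hx : x ∈ bigBox d p R m i)
    {k : Fin d} (hk : (k : ℕ) ≠ i + 2) : |x k - p k| ≤ R ^ m / 2 := by
  have h1 := hx k
  rw [qpt_apply' d p R m i h k] at h1
  have hk' : k ≠ (⟨i + 2, h⟩ : Fin d) := by
    intro he; exact hk (by rw [he])
  simpa [hk'] using h1

private lemma box_big' {d : ℕ} {p : EuclideanSpace ℝ (Fin d)} {R : ℝ} {m i : ℕ}
    (h : i + 2 < d) {x : EuclideanSpace ℝ (Fin d)} (hx : x ∈ bigBox d p R m i) :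
    |x ⟨i + 2, h⟩ - p ⟨i + 2, h⟩ - (10 * d + 1 : ℝ) * R ^ m| ≤ R ^ m / 2 := by
  have h1 := hx ⟨i + 2, h⟩
  have hq : qpt d p R m i ⟨i + 2, h⟩ = p ⟨i + 2, h⟩ + (10 * d + 1 : ℝ) * R ^ m := by
    rw [qpt_apply' d p R m i h]; simp
  rw [hq] at h1
  have : x ⟨i + 2, h⟩ - (p ⟨i + 2, h⟩ + (10 * d + 1 : ℝ) * R ^ m)
      = x ⟨i + 2, h⟩ - p ⟨i + 2, h⟩ - (10 * d + 1 : ℝ) * R ^ m := by ring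
  rwa [this] at h1

/-- Cross-product identity for four points on a line. -/
private lemma cross_id {d : ℕ} {L : Set (EuclideanSpace ℝ (Fin d))} (hL : IsLine L)
    {a b c e : EuclideanSpace ℝ (Fin d)} (ha : a ∈ L) (hb : b ∈ L) (hc : c ∈ L)
    (he : e ∈ L) (k k' : Fin d) :
    (a k - b k) * (c k' - e k') = (a k' - b k') * (c k - e k) := by
  obtain ⟨x0, v, -, rfl⟩ := hL
  obtain ⟨ta, rfl⟩ := ha
  obtain ⟨tb, rfl⟩ := hb
  obtain ⟨tc, rfl⟩ := hc
  obtain ⟨te, rfl⟩ := he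
  simp only [PiLp.add_apply, PiLp.smul_apply, smul_eq_mul]
  ring

private lemma pow_half_le {R : ℝ} (hR : 2 ≤ R) {m n : ℕ} (h : m < n) : R ^ m ≤ R ^ n / 2 := by
  have h1 : R ^ m * 2 ≤ R ^ m * R := by nlinarith [pow_pos (by linarith : (0:ℝ) < R) m]
  have h3 : R ^ (m + 1) ≤ R ^ n := pow_le_pow_right₀ (by linarith) h
  rw [pow_succ] at h3; linarith

/-- Lower bound on the big coordinates of the difference of points in consecutive boxes. -/
private lemma pair_big {d : ℕ} {p : EuclideanSpace ℝ (Fin d)} {R : ℝ} {m i : ℕ}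
    (h3 : i + 3 < d) {a b : EuclideanSpace ℝ (Fin d)}
    (ha : a ∈ bigBox d p R m i) (hb : b ∈ bigBox d p R m (i + 1))
    {k : Fin d} (hk : (k : ℕ) = i + 2 ∨ (k : ℕ) = i + 3) :
    ((10 * d + 1 : ℝ) - 1) * R ^ m ≤ |a k - b k| := by
  have h2 : i + 2 < d := by omega
  have h3' : (i + 1) + 2 < d := by omega
  rcases hk with hk | hk
  · -- a big, b small at k
    have hka : k = (⟨i + 2, h2⟩ : Fin d) := Fin.ext hk
    have hA := box_big' h2 ha
    have hB := box_small' h3' hb (k := k) (by omega)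
    rw [abs_le] at hA hB
    subst hka
    have : ((10 * d + 1 : ℝ) - 1) * R ^ m ≤ a ⟨i + 2, h2⟩ - b ⟨i + 2, h2⟩ := by linarith
    exact this.trans (le_abs_self _)
  · -- a small, b big at k
    have hkb : k = (⟨(i + 1) + 2, h3'⟩ : Fin d) := Fin.ext (show (k : ℕ) = (i + 1) + 2 by omega)
    have hA := box_small' h2 ha (k := k) (by omega)
    have hB := box_big' h3' hb
    rw [abs_le] at hA hB
    subst hkb
    have : ((10 * d + 1 : ℝ) - 1) * R ^ m ≤ b ⟨(i+1) + 2, h3'⟩ - a ⟨(i+1) + 2, h3'⟩ := by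
      linarith
    calc ((10 * d + 1 : ℝ) - 1) * R ^ m ≤ b _ - a _ := this
    _ ≤ |b ⟨(i+1)+2, h3'⟩ - a ⟨(i+1)+2, h3'⟩| := le_abs_self _
    _ = |a ⟨(i+1)+2, h3'⟩ - b ⟨(i+1)+2, h3'⟩| := abs_sub_comm _ _

/-- Upper bound on the small coordinates of the difference of points in consecutive boxes. -/
private lemma pair_small {d : ℕ} {p : EuclideanSpace ℝ (Fin d)} {R : ℝ} {m i : ℕ}
    (h3 : i + 3 < d) {a b : EuclideanSpace ℝ (Fin d)}
    (ha : a ∈ bigBox d p R m i) (hb : b ∈ bigBox d p R m (i + 1))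
    {k : Fin d} (hk2 : (k : ℕ) ≠ i + 2) (hk3 : (k : ℕ) ≠ i + 3) :
    |a k - b k| ≤ R ^ m := by
  have h2 : i + 2 < d := by omega
  have h3' : (i + 1) + 2 < d := by omega
  have hA := box_small' h2 ha (k := k) hk2
  have hB := box_small' h3' hb (k := k) (by omega)
  rw [abs_le] at hA hB ⊢
  constructor <;> linarith

private lemma final_neq (N Rm Rn Xk Xk' Yk Yk' : ℝ) (hN : 51 ≤ N)
    (hRm : 0 < Rm) (hRn : 0 < Rn)
    (h1 : (N - 1) * Rm ≤ |Xk|) (h2 : |Xk'| ≤ Rm) (h3 : |Yk| ≤ Rn)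
    (h4 : (N - 1) * Rn ≤ |Yk'|) (hcross : Xk * Yk' = Xk' * Yk) : False := by
  have he : |Xk| * |Yk'| = |Xk'| * |Yk| := by
    rw [← abs_mul, ← abs_mul, hcross]
  nlinarith [mul_pos hRm hRn,
    mul_le_mul h2 h3 (abs_nonneg Yk) hRm.le,
    mul_le_mul h1 h4 (show (0:ℝ) ≤ (N-1)*Rn by nlinarith) (abs_nonneg Xk),
    mul_le_mul_of_nonneg_right (show (2:ℝ) ≤ (N-1)^2 by nlinarith)
      (mul_pos hRm hRn).le]

private lemma final_eq (N Rm RM X2 X3 Y2 Y3 : ℝ) (hN : 51 ≤ N)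
    (hRm : 0 < Rm) (hRM : 0 < RM)
    (hX3 : (N - 1) * Rm ≤ |X3|) (hX2 : |X2| ≤ (N + 1) * Rm) (hY3 : |Y3| ≤ RM)
    (hY2 : N * RM / 2 - RM ≤ |Y2|) (hcross : X2 * Y3 = X3 * Y2) : False := by
  have he : |X2| * |Y3| = |X3| * |Y2| := by
    rw [← abs_mul, ← abs_mul, hcross]
  nlinarith [mul_pos hRm hRM,
    mul_le_mul hX2 hY3 (abs_nonneg Y3) (show (0:ℝ) ≤ (N+1)*Rm by nlinarith),
    mul_le_mul hX3 hY2 (show (0:ℝ) ≤ N*RM/2 - RM by nlinarith) (abs_nonneg X3),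
    mul_le_mul_of_nonneg_right (show (N+1)+1 ≤ (N-1)*(N/2-1) by nlinarith)
      (mul_pos hRm hRM).le]

theorem stmt11 (d : ℕ) (hd : 5 ≤ d) :
    ∃ R₀ : ℝ, ∀ p : EuclideanSpace ℝ (Fin d),
      coordNat p 0 = 0 → coordNat p 1 = 0 →
      ∀ R : ℝ, R₀ ≤ R → (∀ i : Fin d, 2 * |p i| ≤ R) →
      ∀ m n i j : ℕ, 1 ≤ m → 1 ≤ n → 1 ≤ i → i ≤ d - 4 → 1 ≤ j → j ≤ d - 4 →
        (m, i) ≠ (n, j) →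
      ∀ L : Set (EuclideanSpace ℝ (Fin d)), IsLine L →
        ¬ (meets L (bigBox d p R m i) (bigBox d p R m (i + 1)) ∧
           meets L (bigBox d p R n j) (bigBox d p R n (j + 1))) := by
  refine ⟨2, ?_⟩
  intro p _ _ R hR _ m n i j hm hn hi1 hi2 hj1 hj2 hne L hL hmeet
  obtain ⟨⟨⟨a, haL, haB⟩, b, hbL, hbB⟩, ⟨c, hcL, hcB⟩, e, heL, heB⟩ := hmeet
  have hi4 : i + 4 ≤ d := by omega
  have hj4 : j + 4 ≤ d := by omega
  have hR0 : (0:ℝ) < R := by linarith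
  have hRm : (0:ℝ) < R ^ m := pow_pos hR0 m
  have hRn : (0:ℝ) < R ^ n := pow_pos hR0 n
  have hN : (51:ℝ) ≤ 10 * d + 1 := by
    have : (5:ℝ) ≤ d := by exact_mod_cast hd
    linarith
  rcases eq_or_ne i j with rfl | hij
  · -- same index, different scales
    have hmn : m ≠ n := fun h => hne (by rw [h])
    have h2 : i + 2 < d := by omega
    have h3 : i + 3 < d := by omega
    set k2 : Fin d := ⟨i + 2, h2⟩ with hk2def
    set k3 : Fin d := ⟨i + 3, h3⟩ with hk3def
    have hX3 : ((10*d+1:ℝ) - 1) * R ^ m ≤ |a k3 - b k3| :=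
      pair_big h3 haB hbB (Or.inr rfl)
    have hX2 : |a k2 - b k2| ≤ ((10*d+1:ℝ) + 1) * R ^ m := by
      have hA := box_big' h2 haB
      have hB := box_small' (show (i+1)+2 < d by omega) hbB
        (k := k2) (show i + 2 ≠ (i+1)+2 by omega)
      rw [abs_le] at hA hB ⊢
      have hNR : (0:ℝ) ≤ (10*d+1:ℝ) * R ^ m := by positivity
      constructor <;> [linarith [hA.1, hB.2]; linarith [hA.2, hB.1]]
    have hY3 : |a k3 - c k3| ≤ R ^ m / 2 + R ^ n / 2 := by
      have hA := box_small' h2 haB (k := k3) (show i + 3 ≠ i + 2 by omega)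
      have hC := box_small' h2 hcB (k := k3) (show i + 3 ≠ i + 2 by omega)
      rw [abs_le] at hA hC ⊢
      constructor <;> [linarith [hA.1, hC.2]; linarith [hA.2, hC.1]]
    obtain ⟨hA2l, hA2r⟩ := abs_le.mp (box_big' h2 haB)
    obtain ⟨hC2l, hC2r⟩ := abs_le.mp (box_big' h2 hcB)
    have hcross := cross_id hL haL hbL haL hcL k2 k3
    rcases hmn.lt_or_gt with hlt | hlt
    · -- m < n
      have hhalf := pow_half_le (by linarith : (2:ℝ) ≤ R) hlt
      have hNh : (10*d+1:ℝ) * R ^ m ≤ (10*d+1:ℝ) * (R ^ n / 2) :=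
        mul_le_mul_of_nonneg_left hhalf (by linarith)
      have hY2 : (10*d+1:ℝ) * R ^ n / 2 - R ^ n ≤ |a k2 - c k2| := by
        have hneg : a k2 - c k2 ≤ -((10*d+1:ℝ) * R ^ n / 2 - R ^ n) := by linarith
        have := neg_le_abs (a k2 - c k2)
        linarith
      exact final_eq (10*d+1) (R^m) (R^n) _ _ _ _ hN hRm hRn hX3 hX2
        (hY3.trans (by linarith)) hY2 hcross
    · -- n < m
      have hhalf := pow_half_le (by linarith : (2:ℝ) ≤ R) hlt
      have hNh : (10*d+1:ℝ) * R ^ n ≤ (10*d+1:ℝ) * (R ^ m / 2) :=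
        mul_le_mul_of_nonneg_left hhalf (by linarith)
      have hY2 : (10*d+1:ℝ) * R ^ m / 2 - R ^ m ≤ |a k2 - c k2| := by
        have hpos : (10*d+1:ℝ) * R ^ m / 2 - R ^ m ≤ a k2 - c k2 := by linarith
        exact hpos.trans (le_abs_self _)
      exact final_eq (10*d+1) (R^m) (R^m) _ _ _ _ hN hRm hRm hX3 hX2
        (hY3.trans (by linarith)) hY2 hcross
  · -- different indices
    have h3i : i + 3 < d := by omega
    have h3j : j + 3 < d := by omega
    obtain ⟨kk, hkk, hkd, hkj2, hkj3⟩ :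
        ∃ kk, (kk = i+2 ∨ kk = i+3) ∧ kk < d ∧ kk ≠ j+2 ∧ kk ≠ j+3 := by
      by_cases h : i = j + 1
      · exact ⟨i+3, Or.inr rfl, h3i, by omega, by omega⟩
      · exact ⟨i+2, Or.inl rfl, by omega, by omega, by omega⟩
    obtain ⟨kk', hkk', hkd', hki2, hki3⟩ :
        ∃ kk', (kk' = j+2 ∨ kk' = j+3) ∧ kk' < d ∧ kk' ≠ i+2 ∧ kk' ≠ i+3 := by
      by_cases h : j = i + 1
      · exact ⟨j+3, Or.inr rfl, h3j, by omega, by omega⟩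
      · exact ⟨j+2, Or.inl rfl, by omega, by omega, by omega⟩
    have hXk : ((10*d+1:ℝ) - 1) * R ^ m ≤ |a ⟨kk, hkd⟩ - b ⟨kk, hkd⟩| :=
      pair_big h3i haB hbB hkk
    have hXk' : |a ⟨kk', hkd'⟩ - b ⟨kk', hkd'⟩| ≤ R ^ m :=
      pair_small h3i haB hbB hki2 hki3
    have hYk : |c ⟨kk, hkd⟩ - e ⟨kk, hkd⟩| ≤ R ^ n :=
      pair_small h3j hcB heB hkj2 hkj3
    have hYk' : ((10*d+1:ℝ) - 1) * R ^ n ≤ |c ⟨kk', hkd'⟩ - e ⟨kk', hkd'⟩| :=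
      pair_big h3j hcB heB hkk'
    exact final_neq (10*d+1) (R^m) (R^n) _ _ _ _ hN hRm hRn hXk hXk' hYk hYk'
      (cross_id hL haL hbL hcL heL ⟨kk, hkd⟩ ⟨kk', hkd'⟩)
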